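/- Let K be a real symmetric positive-definite T×T matrix. For every κ̃ ≥ 0, (1/T)·Tr(K(K + κ̃I)⁻²) ≤ ((1/T)·Tr(K⁻¹)) · ((1/T)·Tr(K²(K + κ̃I)⁻²)), with equality when κ̃ = 0. -/

import Mathlib

open Matrix

private lemma stmt7_mono {a b κ : ℝ} (ha : 0 < a) (hab : a ≤ b) (hκ : 0 ≤ κ) :
    a ^ 2 * ((a + κ)⁻¹) ^ 2 ≤ b ^ 2 * ((b + κ)⁻¹) ^ 2 := by
  have hb : 0 < b := lt_of_lt_of_le ha hab
  have h1 : (0:ℝ) < a + κ := by linarith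
  have h2 : (0:ℝ) < b + κ := by linarith
  have key : a / (a + κ) ≤ b / (b + κ) := by
    rw [div_le_div_iff₀ h1 h2]; nlinarith
  have h3 : (0:ℝ) ≤ a / (a + κ) := div_nonneg ha.le h1.le
  have := mul_self_le_mul_self h3 key
  calc a ^ 2 * ((a + κ)⁻¹) ^ 2 = (a / (a + κ)) * (a / (a + κ)) := by
        field_simp
    _ ≤ (b / (b + κ)) * (b / (b + κ)) := this
    _ = b ^ 2 * ((b + κ)⁻¹) ^ 2 := by field_simp

/-- For symmetric positive-definite `K` and every `κ̃ ≥ 0`,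
`(1/T)·Tr(K(K + κ̃I)⁻²) ≤ ((1/T)·Tr(K⁻¹)) · ((1/T)·Tr(K²(K + κ̃I)⁻²))`,
with equality when `κ̃ = 0`. -/
theorem stmt7 {T : ℕ} (K : Matrix (Fin T) (Fin T) ℝ) (hK : K.PosDef) :
    (∀ κ : ℝ, 0 ≤ κ →
      (1 / (T : ℝ)) * (K * ((K + κ • (1 : Matrix (Fin T) (Fin T) ℝ))⁻¹) ^ 2).trace ≤
        ((1 / (T : ℝ)) * K⁻¹.trace) *
          ((1 / (T : ℝ)) * (K ^ 2 * ((K + κ • (1 : Matrix (Fin T) (Fin T) ℝ))⁻¹) ^ 2).trace)) ∧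
    (1 / (T : ℝ)) * (K * ((K + (0 : ℝ) • (1 : Matrix (Fin T) (Fin T) ℝ))⁻¹) ^ 2).trace =
      ((1 / (T : ℝ)) * K⁻¹.trace) *
        ((1 / (T : ℝ)) * (K ^ 2 * ((K + (0 : ℝ) • (1 : Matrix (Fin T) (Fin T) ℝ))⁻¹) ^ 2).trace) := by
  classical
  set ev := hK.1.eigenvalues with hev
  set U : Matrix (Fin T) (Fin T) ℝ := (hK.1.eigenvectorUnitary : Matrix (Fin T) (Fin T) ℝ)
    with hUdef
  have hU1 : U * star U = 1 := Matrix.mem_unitaryGroup_iff.mp hK.1.eigenvectorUnitary.2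
  have hU2 : star U * U = 1 := Matrix.mem_unitaryGroup_iff'.mp hK.1.eigenvectorUnitary.2
  have spec : K = U * diagonal ev * star U := by
    have := hK.1.spectral_theorem
    simpa using this
  have hpos : ∀ i, 0 < ev i := fun i => hK.eigenvalues_pos i
  -- conjugation helpers
  have conj_mul : ∀ d e : Fin T → ℝ,
      (U * diagonal d * star U) * (U * diagonal e * star U)
        = U * diagonal (fun i => d i * e i) * star U := by
    intro d e
    have h : star U * (U * (diagonal e * star U)) = diagonal e * star U := by
      rw [← Matrix.mul_assoc, hU2, Matrix.one_mul]
    simp only [Matrix.mul_assoc]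
    rw [h, ← Matrix.mul_assoc (diagonal d) (diagonal e) (star U),
      Matrix.diagonal_mul_diagonal]
  have conj_trace : ∀ d : Fin T → ℝ, (U * diagonal d * star U).trace = ∑ i, d i := by
    intro d
    rw [Matrix.trace_mul_cycle, hU2, Matrix.one_mul, Matrix.trace_diagonal]
  have conj_inv : ∀ d : Fin T → ℝ, (∀ i, d i ≠ 0) →
      (U * diagonal d * star U)⁻¹ = U * diagonal (fun i => (d i)⁻¹) * star U := by
    intro d hd
    apply Matrix.inv_eq_right_inv
    rw [conj_mul]
    have : (fun i => d i * (d i)⁻¹) = fun _ => (1:ℝ) := by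
      funext i; exact mul_inv_cancel₀ (hd i)
    rw [this, Matrix.diagonal_one, Matrix.mul_one, hU1]
  have hKinv : K⁻¹ = U * diagonal (fun i => (ev i)⁻¹) * star U := by
    rw [spec]; exact conj_inv ev (fun i => (hpos i).ne')
  have hKplus : ∀ κ : ℝ, K + κ • (1 : Matrix (Fin T) (Fin T) ℝ)
      = U * diagonal (fun i => ev i + κ) * star U := by
    intro κ
    have h1 : (κ • (1 : Matrix (Fin T) (Fin T) ℝ)) = U * diagonal (fun _ => κ) * star U := by
      rw [← Matrix.smul_one_eq_diagonal]
      rw [Matrix.mul_smul, Matrix.mul_one, Matrix.smul_mul, hU1]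
    rw [spec, h1, ← Matrix.add_mul, ← Matrix.mul_add, Matrix.diagonal_add]
  -- trace formulas for κ ≥ 0
  have key : ∀ κ : ℝ, 0 ≤ κ →
      (K * ((K + κ • (1 : Matrix (Fin T) (Fin T) ℝ))⁻¹) ^ 2).trace
        = ∑ i, (ev i) * ((ev i + κ)⁻¹ * (ev i + κ)⁻¹) ∧
      (K ^ 2 * ((K + κ • (1 : Matrix (Fin T) (Fin T) ℝ))⁻¹) ^ 2).trace
        = ∑ i, (ev i * ev i) * ((ev i + κ)⁻¹ * (ev i + κ)⁻¹) := by
    intro κ hκ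
    have hne : ∀ i, ev i + κ ≠ 0 := fun i => by have := hpos i; positivity
    have hinv : (K + κ • (1 : Matrix (Fin T) (Fin T) ℝ))⁻¹
        = U * diagonal (fun i => (ev i + κ)⁻¹) * star U := by
      rw [hKplus κ]; exact conj_inv _ hne
    have hsq : ((K + κ • (1 : Matrix (Fin T) (Fin T) ℝ))⁻¹) ^ 2
        = U * diagonal (fun i => (ev i + κ)⁻¹ * (ev i + κ)⁻¹) * star U := by
      rw [sq, hinv, conj_mul]
    have hKsq : K ^ 2 = U * diagonal (fun i => ev i * ev i) * star U := by
      rw [sq, spec, conj_mul]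
    constructor
    · rw [hsq]; nth_rewrite 1 [spec]; rw [conj_mul, conj_trace]
    · rw [hsq, hKsq, conj_mul, conj_trace]
  have htrinv : K⁻¹.trace = ∑ i, (ev i)⁻¹ := by rw [hKinv, conj_trace]
  constructor
  · intro κ hκ
    obtain ⟨h1, h2⟩ := key κ hκ
    rw [h1, h2, htrinv]
    -- Chebyshev
    set f : Fin T → ℝ := fun i => (ev i)⁻¹ with hf
    set g : Fin T → ℝ := fun i => (ev i * ev i) * ((ev i + κ)⁻¹ * (ev i + κ)⁻¹) with hg
    have hanti : Antivary f g := by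
      intro i j hij
      have hle : ev i ≤ ev j := by
        by_contra hcon
        push_neg at hcon
        have h2 : g j ≤ g i := by
          simp only [hg]
          calc ev j * ev j * ((ev j + κ)⁻¹ * (ev j + κ)⁻¹)
              = ev j ^ 2 * ((ev j + κ)⁻¹) ^ 2 := by ring
            _ ≤ ev i ^ 2 * ((ev i + κ)⁻¹) ^ 2 := stmt7_mono (hpos j) hcon.le hκ
            _ = ev i * ev i * ((ev i + κ)⁻¹ * (ev i + κ)⁻¹) := by ring
        exact absurd hij (not_lt.mpr h2)
      exact inv_anti₀ (hpos i) hle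
    have cheb := hanti.card_mul_sum_le_sum_mul_sum
    simp only [Fintype.card_fin] at cheb
    have hfg : ∀ i, f i * g i = ev i * ((ev i + κ)⁻¹ * (ev i + κ)⁻¹) := by
      intro i
      simp only [hf, hg]
      field_simp
    rcases Nat.eq_zero_or_pos T with hT | hT
    · subst hT; simp
    · have hTpos : (0:ℝ) < T := by exact_mod_cast hT
      have hS : ∑ i, ev i * ((ev i + κ)⁻¹ * (ev i + κ)⁻¹) = ∑ i, f i * g i :=
        Finset.sum_congr rfl (fun i _ => (hfg i).symm)
      rw [hS]
      calc (1 / (T:ℝ)) * ∑ i, f i * g i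
          = (1 / (T:ℝ)) ^ 2 * ((T:ℝ) * ∑ i, f i * g i) := by
            field_simp
        _ ≤ (1 / (T:ℝ)) ^ 2 * ((∑ i, f i) * ∑ i, g i) :=
            mul_le_mul_of_nonneg_left cheb (by positivity)
        _ = ((1 / (T:ℝ)) * ∑ i, f i) * ((1 / (T:ℝ)) * ∑ i, g i) := by ring
  · -- equality at κ = 0
    obtain ⟨h1, h2⟩ := key 0 le_rfl
    rw [h1, h2, htrinv]
    have e1 : ∀ i, ev i * ((ev i + 0)⁻¹ * (ev i + 0)⁻¹) = (ev i)⁻¹ := by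
      intro i; have := (hpos i).ne'; simp only [add_zero]; field_simp
    have e2 : ∀ i, (ev i * ev i) * ((ev i + 0)⁻¹ * (ev i + 0)⁻¹) = 1 := by
      intro i; have := (hpos i).ne'; simp only [add_zero]; field_simp
    rw [Finset.sum_congr rfl (fun i _ => e1 i), Finset.sum_congr rfl (fun i _ => e2 i)]
    rcases Nat.eq_zero_or_pos T with hT | hT
    · subst hT; simp
    · have hTpos : (0:ℝ) < T := by exact_mod_cast hT
      simp only [Finset.sum_const, Finset.card_univ, Fintype.card_fin, nsmul_eq_mul, mul_one]
      rw [one_div, inv_mul_cancel₀ hTpos.ne', mul_one]
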